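/- In the ring A = F_2[v,v^{-1}][h, l]/(h^{d+1} − v h^{2^n} l, l² − ε·l h^{2d−2^n+1}, h^{D+1}) modeling K(n)^*(Q; F_2) of a split quadric of dimension D = 2d (with ε = 1 iff D ≡ 0 mod 4, and D ≥ 2^{n+1} − 1, n ≥ 2), the monomials h^0, ..., h^d together with l, lh, ..., lh^d form a basis of A as a free F_2[v,v^{-1}]-module, where lh^i corresponds to l_{d−i}. -/

import Mathlib

noncomputable section

open MvPolynomial

/-- The coefficient ring `F₂[v, v⁻¹]`. -/
abbrev Rq : Type := LaurentPolynomial (ZMod 2)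

/-- The defining ideal of `K(n)^*(Q; F₂) = F₂[v,v⁻¹][h,l]/(h^{d+1} − v h^{2^n} l,
l² − ε·l h^{2d−2^n+1}, h^{D+1})` for a split quadric of dimension `D = 2d`,
where `h = X 0`, `l = X 1` and `ε = 1` iff `D ≡ 0 mod 4`. -/
def qIdeal (n d : ℕ) : Ideal (MvPolynomial (Fin 2) Rq) :=
  Ideal.span
    { X 0 ^ (d + 1) - C (LaurentPolynomial.T 1) * X 0 ^ (2 ^ n) * X 1,
      X 1 ^ 2 - (if (2 * d) % 4 = 0 then 1 else 0 : MvPolynomial (Fin 2) Rq) *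
        X 1 * X 0 ^ (2 * d - 2 ^ n + 1),
      X 0 ^ (2 * d + 1) }

/-- The model `A` of `K(n)^*(Q; F₂)` for a split quadric of dimension `D = 2d`. -/
abbrev Aq (n d : ℕ) : Type := MvPolynomial (Fin 2) Rq ⧸ qIdeal n d

/-- The candidate basis `h^0, …, h^d, l, l·h, …, l·h^d` of `Aq n d` (where `l·h^i`
corresponds to `l_{d-i}`). -/
def qBasisFam (n d : ℕ) : Fin (d + 1) ⊕ Fin (d + 1) → Aq n d := fun k =>
  match k with
  | .inl i => Ideal.Quotient.mk (qIdeal n d) (X 0 ^ (i : ℕ))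
  | .inr i => Ideal.Quotient.mk (qIdeal n d) (X 1 * X 0 ^ (i : ℕ))

/-! ### Auxiliary: normal form map -/

abbrev Mq (d : ℕ) : Type := (Fin (d + 1) ⊕ Fin (d + 1)) →₀ Rq

def NF (n d : ℕ) : ℕ → ℕ → Mq d := fun a b =>
  if b = 0 then
    (if ha : a ≤ d then Finsupp.single (Sum.inl ⟨a, by omega⟩) 1
     else if ha2 : a - (d + 1) + 2 ^ n ≤ d then
       Finsupp.single (Sum.inr ⟨a - (d + 1) + 2 ^ n, by omega⟩) (LaurentPolynomial.T 1)
     else 0)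
  else if b = 1 then
    (if ha : a ≤ d then Finsupp.single (Sum.inr ⟨a, by omega⟩) 1 else 0)
  else 0

lemma NF1 (n d a b : ℕ) :
    NF n d (a + (d + 1)) b = (LaurentPolynomial.T 1 : Rq) • NF n d (a + 2 ^ n) (b + 1) := by
  rcases b with _ | _ | b
  · have h1 : ¬ (a + (d + 1) ≤ d) := by omega
    have h2 : a + (d + 1) - (d + 1) + 2 ^ n = a + 2 ^ n := by omega
    simp only [NF, if_pos rfl, dif_neg h1, h2, Nat.add_eq, if_neg (by omega : ¬(0+1=0)), if_pos rfl]
    split_ifs with h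
    all_goals simp [Finsupp.smul_single]
  · simp [NF]
    omega
  · simp [NF]

lemma NF2 (n d a b : ℕ) (hd : 2 ^ n ≤ d) : NF n d (a + (2 * d - 2 ^ n + 1)) (b + 1) = 0 := by
  rcases b with _ | b
  · simp [NF]; omega
  · simp [NF]

lemma NF3 (n d a b : ℕ) : NF n d a (b + 2) = 0 := by simp [NF]

lemma NF4 (n d a b : ℕ) : NF n d (a + (2 * d + 1)) b = 0 := by
  have h1 : 1 ≤ 2 ^ n := Nat.one_le_two_pow
  rcases b with _ | _ | b
  · simp [NF]
    rw [dif_neg (by omega), dif_neg (by omega)]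
  · simp [NF]; omega
  · simp [NF]

def phiq (n d : ℕ) : MvPolynomial (Fin 2) Rq →ₗ[Rq] Mq d :=
  Module.Basis.constr (MvPolynomial.basisMonomials (Fin 2) Rq) Rq fun m => NF n d (m 0) (m 1)

lemma phiq_monomial (n d : ℕ) (m : Fin 2 →₀ ℕ) (c : Rq) :
    phiq n d (monomial m c) = c • NF n d (m 0) (m 1) := by
  have h : monomial m c = c • ((MvPolynomial.basisMonomials (Fin 2) Rq) m) := by
    rw [coe_basisMonomials]
    simp [smul_monomial]
  rw [h, map_smul, phiq, Module.Basis.constr_basis]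

/-! ### phiq kills the three generators times monomials -/

lemma mul_g1_eq (n d : ℕ) (m : Fin 2 →₀ ℕ) (c : Rq) :
    monomial m c * (X 0 ^ (d + 1) - C (LaurentPolynomial.T 1) * X 0 ^ (2 ^ n) * X 1)
      = monomial (m + Finsupp.single 0 (d+1)) c
        - monomial (m + (Finsupp.single 0 (2^n) + Finsupp.single 1 1)) (c * LaurentPolynomial.T 1) := by
  simp only [mul_sub, X, C_apply, monomial_pow, monomial_mul, one_pow, Finsupp.smul_single,
    smul_eq_mul, mul_one]
  congr 2
  ext i; simp [Finsupp.single_apply]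

lemma mul_g2_eq (n d : ℕ) (m : Fin 2 →₀ ℕ) (c : Rq) :
    monomial m c * (X 1 ^ 2 - (1 : MvPolynomial (Fin 2) Rq) * X 1 * X 0 ^ (2 * d - 2 ^ n + 1))
      = monomial (m + Finsupp.single 1 2) c
        - monomial (m + (Finsupp.single 1 1 + Finsupp.single 0 (2*d-2^n+1))) c := by
  simp only [mul_sub, X, one_mul, monomial_pow, monomial_mul, one_pow, Finsupp.smul_single,
    smul_eq_mul, mul_one]

lemma mul_g3_eq (d : ℕ) (m : Fin 2 →₀ ℕ) (c : Rq) :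
    monomial m c * (X 0 ^ (2*d+1) : MvPolynomial (Fin 2) Rq)
      = monomial (m + Finsupp.single 0 (2*d+1)) c := by
  simp only [X, monomial_pow, monomial_mul, one_pow, Finsupp.smul_single, smul_eq_mul, mul_one]

lemma fin2_apply_add (m : Fin 2 →₀ ℕ) (t : Fin 2 →₀ ℕ) (i : Fin 2) :
    (m + t) i = m i + t i := rfl

lemma phiq_mul_g1 (n d : ℕ) (p : MvPolynomial (Fin 2) Rq) :
    phiq n d (p * (X 0 ^ (d + 1) - C (LaurentPolynomial.T 1) * X 0 ^ (2 ^ n) * X 1)) = 0 := by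
  induction p using MvPolynomial.induction_on' with
  | add p q hp hq => rw [add_mul, map_add, hp, hq, add_zero]
  | monomial m c =>
    rw [mul_g1_eq, map_sub, phiq_monomial, phiq_monomial]
    have e0 : ((m + Finsupp.single (0:Fin 2) (d+1) : Fin 2 →₀ ℕ)) 0 = m 0 + (d + 1) := by
      simp [Finsupp.single_apply]
    have e1 : ((m + Finsupp.single (0:Fin 2) (d+1) : Fin 2 →₀ ℕ)) 1 = m 1 := by
      simp [Finsupp.single_apply]
    have e2 : ((m + (Finsupp.single (0:Fin 2) (2^n) + Finsupp.single 1 1) : Fin 2 →₀ ℕ)) 0 = m 0 + 2 ^ n := by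
      simp [Finsupp.single_apply]
    have e3 : ((m + (Finsupp.single (0:Fin 2) (2^n) + Finsupp.single 1 1) : Fin 2 →₀ ℕ)) 1 = m 1 + 1 := by
      simp [Finsupp.single_apply]
    rw [e0, e1, e2, e3, NF1, smul_smul, sub_self]

lemma phiq_mul_g2 (n d : ℕ) (hd : 2 ^ n ≤ d) (p : MvPolynomial (Fin 2) Rq) :
    phiq n d (p * (X 1 ^ 2 - (if (2 * d) % 4 = 0 then 1 else 0 : MvPolynomial (Fin 2) Rq) *
        X 1 * X 0 ^ (2 * d - 2 ^ n + 1))) = 0 := by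
  induction p using MvPolynomial.induction_on' with
  | add p q hp hq => rw [add_mul, map_add, hp, hq, add_zero]
  | monomial m c =>
    by_cases hε : (2 * d) % 4 = 0
    · rw [if_pos hε, mul_g2_eq, map_sub, phiq_monomial, phiq_monomial]
      have e0 : ((m + Finsupp.single (1:Fin 2) 2 : Fin 2 →₀ ℕ)) 0 = m 0 := by simp [Finsupp.single_apply]
      have e1 : ((m + Finsupp.single (1:Fin 2) 2 : Fin 2 →₀ ℕ)) 1 = m 1 + 2 := by simp [Finsupp.single_apply]
      have e2 : ((m + (Finsupp.single (1:Fin 2) 1 + Finsupp.single 0 (2*d-2^n+1)) : Fin 2 →₀ ℕ)) 0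
          = m 0 + (2*d-2^n+1) := by simp [Finsupp.single_apply]
      have e3 : ((m + (Finsupp.single (1:Fin 2) 1 + Finsupp.single 0 (2*d-2^n+1)) : Fin 2 →₀ ℕ)) 1
          = m 1 + 1 := by simp [Finsupp.single_apply]
      rw [e0, e1, e2, e3, NF3, NF2 n d _ _ hd]
      simp
    · rw [if_neg hε, zero_mul, zero_mul, sub_zero]
      have hX : (X 1 ^ 2 : MvPolynomial (Fin 2) Rq) = monomial (Finsupp.single 1 2) 1 :=
        X_pow_eq_monomial
      rw [hX, monomial_mul, phiq_monomial]
      have e0 : ((m + Finsupp.single (1:Fin 2) 2 : Fin 2 →₀ ℕ)) 0 = m 0 := by simp [Finsupp.single_apply]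
      have e1 : ((m + Finsupp.single (1:Fin 2) 2 : Fin 2 →₀ ℕ)) 1 = m 1 + 2 := by simp [Finsupp.single_apply]
      rw [e0, e1, NF3, smul_zero]

lemma phiq_mul_g3 (n d : ℕ) (p : MvPolynomial (Fin 2) Rq) :
    phiq n d (p * (X 0 ^ (2 * d + 1) : MvPolynomial (Fin 2) Rq)) = 0 := by
  induction p using MvPolynomial.induction_on' with
  | add p q hp hq => rw [add_mul, map_add, hp, hq, add_zero]
  | monomial m c =>
    rw [mul_g3_eq, phiq_monomial]
    have e0 : ((m + Finsupp.single (0:Fin 2) (2*d+1) : Fin 2 →₀ ℕ)) 0 = m 0 + (2*d+1) := by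
      simp [Finsupp.single_apply]
    have e1 : ((m + Finsupp.single (0:Fin 2) (2*d+1) : Fin 2 →₀ ℕ)) 1 = m 1 := by
      simp [Finsupp.single_apply]
    rw [e0, e1, NF4, smul_zero]

lemma phiq_vanish (n d : ℕ) (hd : 2 ^ n ≤ d) (x : MvPolynomial (Fin 2) Rq)
    (hx : x ∈ qIdeal n d) : phiq n d x = 0 := by
  have key : ∀ y ∈ qIdeal n d, ∀ p, phiq n d (p * y) = 0 := by
    intro y hy
    refine Submodule.span_induction ?_ ?_ ?_ ?_ hy
    · intro z hz p
      simp only [Set.mem_insert_iff, Set.mem_singleton_iff] at hz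
      rcases hz with rfl | rfl | rfl
      · exact phiq_mul_g1 n d p
      · exact phiq_mul_g2 n d hd p
      · exact phiq_mul_g3 n d p
    · intro p; rw [mul_zero, map_zero]
    · intro z w _ _ hz hw p
      rw [mul_add, map_add, hz, hw, add_zero]
    · intro r z _ hz p
      rw [smul_eq_mul, ← mul_assoc, hz]
  have := key x hx 1
  rwa [one_mul] at this

/-! ### values of phiq on the candidate basis -/

def qPoly (n d : ℕ) : Fin (d + 1) ⊕ Fin (d + 1) → MvPolynomial (Fin 2) Rq := fun k =>
  match k with
  | .inl i => X 0 ^ (i : ℕ)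
  | .inr i => X 1 * X 0 ^ (i : ℕ)

lemma phiq_qPoly (n d : ℕ) (k : Fin (d + 1) ⊕ Fin (d + 1)) :
    phiq n d (qPoly n d k) = Finsupp.single k 1 := by
  rcases k with i | i
  · have : (X 0 ^ (i:ℕ) : MvPolynomial (Fin 2) Rq) = monomial (Finsupp.single 0 (i:ℕ)) 1 :=
      X_pow_eq_monomial
    rw [qPoly, this, phiq_monomial]
    have e0 : (Finsupp.single (0:Fin 2) (i:ℕ)) 0 = (i:ℕ) := by simp
    have e1 : (Finsupp.single (0:Fin 2) (i:ℕ)) 1 = 0 := by simp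
    rw [e0, e1, one_smul, NF]
    simp only [if_pos rfl, dif_pos (by omega : (i:ℕ) ≤ d)]
    rfl
  · have hX : (X 1 * X 0 ^ (i:ℕ) : MvPolynomial (Fin 2) Rq)
        = monomial (Finsupp.single 1 1 + Finsupp.single 0 (i:ℕ)) 1 := by
      rw [X_pow_eq_monomial, X, monomial_mul, mul_one]
    rw [qPoly, hX, phiq_monomial]
    have e0 : ((Finsupp.single (1:Fin 2) 1 + Finsupp.single 0 (i:ℕ) : Fin 2 →₀ ℕ)) 0 = (i:ℕ) := by
      simp [Finsupp.single_apply]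
    have e1 : ((Finsupp.single (1:Fin 2) 1 + Finsupp.single 0 (i:ℕ) : Fin 2 →₀ ℕ)) 1 = 1 := by
      simp [Finsupp.single_apply]
    rw [e0, e1, one_smul, NF]
    simp only [if_neg (by omega : ¬(1=0)), if_pos rfl, dif_pos (by omega : (i:ℕ) ≤ d)]
    rfl


set_option maxHeartbeats 2000000 in
set_option synthInstance.maxHeartbeats 200000 in
/-- The monomials `h^0, …, h^d, l, lh, …, lh^d` form a basis of
`A = F₂[v,v⁻¹][h,l]/(h^{d+1} − v h^{2^n} l, l² − ε·l h^{2d−2^n+1}, h^{D+1})` as a free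
`F₂[v,v⁻¹]`-module, for `n ≥ 2` and `D = 2d ≥ 2^{n+1} − 1`. -/
theorem qBasisFam_is_basis (n d : ℕ) (hn : 2 ≤ n) (hD : 2 ^ (n + 1) - 1 ≤ 2 * d) :
    LinearIndependent Rq (qBasisFam n d) ∧
    Submodule.span Rq (Set.range (qBasisFam n d)) = ⊤ := by
  have hd : 2 ^ n ≤ d := by
    have h2 : 2 ^ (n+1) = 2 * 2 ^ n := by rw [pow_succ]; ring
    have h3 : 1 ≤ 2 ^ n := Nat.one_le_two_pow
    omega
  set mkq := Ideal.Quotient.mk (qIdeal n d) with hmkq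
  have mk_smul : ∀ (c : Rq) (p : MvPolynomial (Fin 2) Rq), mkq (c • p) = c • mkq p := by
    intro c p
    rw [hmkq, ← Ideal.Quotient.mkₐ_eq_mk Rq, map_smul]
  have mk_C_mul : ∀ (c : Rq) (p : MvPolynomial (Fin 2) Rq), mkq (C c * p) = c • mkq p := by
    intro c p
    rw [← MvPolynomial.smul_eq_C_mul, mk_smul]
  -- generator relations in the quotient
  have hg1 : (X 0 ^ (d + 1) - C (LaurentPolynomial.T 1) * X 0 ^ (2 ^ n) * X 1) ∈ qIdeal n d :=
    Ideal.subset_span (by left; rfl)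
  have hg2 : (X 1 ^ 2 - (if (2 * d) % 4 = 0 then 1 else 0 : MvPolynomial (Fin 2) Rq) *
      X 1 * X 0 ^ (2 * d - 2 ^ n + 1)) ∈ qIdeal n d :=
    Ideal.subset_span (by right; left; rfl)
  have hg3 : (X 0 ^ (2 * d + 1) : MvPolynomial (Fin 2) Rq) ∈ qIdeal n d :=
    Ideal.subset_span (by right; right; rfl)
  have rel1 : mkq (X 0 ^ (d + 1)) = mkq (C (LaurentPolynomial.T 1) * X 0 ^ (2 ^ n) * X 1) :=
    (Ideal.Quotient.mk_eq_mk_iff_sub_mem _ _).mpr hg1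
  have rel2 : mkq (X 1 ^ 2) = mkq ((if (2 * d) % 4 = 0 then 1 else 0 : MvPolynomial (Fin 2) Rq) *
      X 1 * X 0 ^ (2 * d - 2 ^ n + 1)) :=
    (Ideal.Quotient.mk_eq_mk_iff_sub_mem _ _).mpr hg2
  have rel3 : mkq (X 0 ^ (2 * d + 1)) = 0 := Ideal.Quotient.eq_zero_iff_mem.mpr hg3
  -- l · h^{d+1} = 0
  have hLH : mkq (X 1 * X 0 ^ (d + 1)) = 0 := by
    have step1 : mkq (X 1 * X 0 ^ (d + 1))
        = mkq (C (LaurentPolynomial.T 1) * X 0 ^ (2 ^ n) * X 1 ^ 2) := by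
      rw [map_mul, rel1, ← map_mul]
      ring_nf
    rw [step1]
    have step2 : (C (LaurentPolynomial.T 1) * X 0 ^ (2 ^ n) * X 1 ^ 2 : MvPolynomial (Fin 2) Rq)
        = X 1 ^ 2 * (C (LaurentPolynomial.T 1) * X 0 ^ (2 ^ n)) := by ring
    rw [step2, map_mul, rel2]
    by_cases hε : (2 * d) % 4 = 0
    · rw [if_pos hε, one_mul, ← map_mul]
      have step3 : (X 1 * X 0 ^ (2 * d - 2 ^ n + 1) * (C (LaurentPolynomial.T 1) * X 0 ^ (2 ^ n))
          : MvPolynomial (Fin 2) Rq)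
          = C (LaurentPolynomial.T 1) * X 1 * X 0 ^ (2 * d + 1) := by
        have hexp : 2 * d - 2 ^ n + 1 + 2 ^ n = 2 * d + 1 := by omega
        have h4 : (X 1 * X 0 ^ (2 * d - 2 ^ n + 1) * (C (LaurentPolynomial.T 1) * X 0 ^ (2 ^ n))
            : MvPolynomial (Fin 2) Rq)
            = C (LaurentPolynomial.T 1) * X 1 * (X 0 ^ (2 * d - 2 ^ n + 1) * X 0 ^ (2 ^ n)) := by
          ring
        rw [h4, ← pow_add, hexp]
      rw [step3, map_mul, rel3]
      exact mul_zero (M₀ := Aq n d) _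
    · rw [if_neg hε]
      rw [show ((0 : MvPolynomial (Fin 2) Rq) * X 1 * X 0 ^ (2 * d - 2 ^ n + 1))
        = (0 : MvPolynomial (Fin 2) Rq) from by ring]
      rw [map_zero]
      exact zero_mul (M₀ := Aq n d) _
  -- l² = 0
  have hL2 : mkq (X 1 ^ 2) = 0 := by
    rw [rel2]
    by_cases hε : (2 * d) % 4 = 0
    · rw [if_pos hε, one_mul]
      have : (X 1 * X 0 ^ (2 * d - 2 ^ n + 1) : MvPolynomial (Fin 2) Rq)
          = (X 1 * X 0 ^ (d + 1)) * X 0 ^ (2 * d - 2 ^ n + 1 - (d + 1)) := by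
        rw [mul_assoc, ← pow_add]
        congr 2
        omega
      rw [this, map_mul]
      exact mul_eq_zero_of_left hLH _
    · rw [if_neg hε]
      rw [show ((0 : MvPolynomial (Fin 2) Rq) * X 1 * X 0 ^ (2 * d - 2 ^ n + 1))
        = (0 : MvPolynomial (Fin 2) Rq) from by ring]
      exact map_zero _
  set Sp := Submodule.span Rq (Set.range (qBasisFam n d)) with hSp
  have hLj : ∀ j : ℕ, mkq (X 1 * X 0 ^ j) ∈ Sp := by
    intro j
    by_cases hj : j ≤ d
    · have : mkq (X 1 * X 0 ^ j) = qBasisFam n d (Sum.inr ⟨j, by omega⟩) := rfl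
      rw [this]
      exact Submodule.subset_span (Set.mem_range_self _)
    · have : (X 1 * X 0 ^ j : MvPolynomial (Fin 2) Rq)
          = (X 1 * X 0 ^ (d + 1)) * X 0 ^ (j - (d + 1)) := by
        rw [mul_assoc, ← pow_add]
        congr 2
        omega
      have h0 : mkq (X 1 * X 0 ^ (d + 1) * X 0 ^ (j - (d + 1))) = 0 := by
        rw [map_mul]
        exact mul_eq_zero_of_left hLH _
      rw [this, h0]
      exact Submodule.zero_mem _
  have hHa : ∀ a : ℕ, mkq (X 0 ^ a) ∈ Sp := by
    intro a
    by_cases ha : a ≤ d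
    · have : mkq (X 0 ^ a) = qBasisFam n d (Sum.inl ⟨a, by omega⟩) := rfl
      rw [this]
      exact Submodule.subset_span (Set.mem_range_self _)
    · have h1 : (X 0 ^ a : MvPolynomial (Fin 2) Rq) = X 0 ^ (d + 1) * X 0 ^ (a - (d + 1)) := by
        rw [← pow_add]; congr 1; omega
      have h2 : (C (LaurentPolynomial.T 1) * X 0 ^ (2 ^ n) * X 1 * X 0 ^ (a - (d + 1))
          : MvPolynomial (Fin 2) Rq)
          = C (LaurentPolynomial.T 1) * (X 1 * X 0 ^ (2 ^ n + (a - (d + 1)))) := by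
        rw [pow_add]; ring
      rw [h1, map_mul, rel1, ← map_mul, h2, mk_C_mul]
      exact Submodule.smul_mem _ _ (hLj _)
  have hmono : ∀ a b : ℕ, mkq (X 0 ^ a * X 1 ^ b) ∈ Sp := by
    intro a b
    rcases b with _ | _ | b
    · rw [pow_zero, mul_one]; exact hHa a
    · rw [pow_one, mul_comm]; exact hLj a
    · have : (X 0 ^ a * X 1 ^ (b + 2) : MvPolynomial (Fin 2) Rq)
          = X 1 ^ 2 * (X 0 ^ a * X 1 ^ b) := by ring
      have h0 : mkq (X 1 ^ 2 * (X 0 ^ a * X 1 ^ b)) = 0 := by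
        rw [map_mul]
        exact mul_eq_zero_of_left hL2 _
      rw [this, h0]
      exact Submodule.zero_mem _
  have mono_eq : ∀ m : Fin 2 →₀ ℕ, (monomial m 1 : MvPolynomial (Fin 2) Rq)
      = X 0 ^ (m 0) * X 1 ^ (m 1) := by
    intro m
    have hm : (Finsupp.single (0 : Fin 2) (m 0) + Finsupp.single 1 (m 1) : Fin 2 →₀ ℕ) = m := by
      ext i
      fin_cases i <;> simp [Finsupp.single_apply]
    rw [X_pow_eq_monomial, X_pow_eq_monomial, monomial_mul, mul_one, hm]
  constructor
  · -- linear independence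
    rw [Fintype.linearIndependent_iff]
    intro g hg i
    have hmk : mkq (∑ k, g k • qPoly n d k) = 0 := by
      have : mkq (∑ k, g k • qPoly n d k) = ∑ k, g k • qBasisFam n d k := by
        rw [map_sum]
        refine Finset.sum_congr rfl fun k _ => ?_
        rw [mk_smul]
        congr 1
        rcases k with j | j <;> rfl
      rw [this, hg]
    have hmem : (∑ k, g k • qPoly n d k) ∈ qIdeal n d :=
      Ideal.Quotient.eq_zero_iff_mem.mp hmk
    have hphi := phiq_vanish n d hd _ hmem
    rw [map_sum] at hphi
    simp_rw [map_smul, phiq_qPoly] at hphi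
    have := DFunLike.congr_fun hphi i
    rcases i with j | j <;>
      simpa [Finsupp.single_apply, Finset.sum_ite_eq'] using this
  · -- spanning
    rw [eq_top_iff]
    rintro x -
    obtain ⟨p, rfl⟩ := Ideal.Quotient.mk_surjective x
    induction p using MvPolynomial.induction_on' with
    | monomial m c =>
      have h1 : (monomial m c : MvPolynomial (Fin 2) Rq) = c • monomial m 1 := by
        simp [smul_monomial]
      rw [h1, mk_smul]
      exact Submodule.smul_mem _ _ (by rw [mono_eq]; exact hmono _ _)
    | add p q hp hq =>
      rw [map_add]
      exact add_mem hp hq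

end
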